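/- Fix λ ∈ ℂ with 0 < |λ| < 1, and let f : (ℂ∖{0})² → ℝ≥0 be a measurable function invariant under σ(ξ,η) = (λξ, μη) for some μ with |μ| = 1, i.e., f∘σ = f. Let ψ(ξ,η) = (log|ξ|²)² + log(|η|² + 1/|η|²), and let dλ̃ be a σ-invariant measure on (ℂ∖{0})². If ∫_{D₀} f dλ̃ < ∞, where D₀ = {|λ| ≤ |ξ| ≤ 1}, then ∫_{(ℂ*)²} f · e^{−ψ} dλ̃ ≤ (Σ_{n≥0} 2·e^{−n²(log|λ|²)²}) · ∫_{D₀} f dλ̃ < ∞. -/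

import Mathlib

open MeasureTheory
open scoped ENNReal NNReal

set_option maxHeartbeats 1000000 in
/-- Fix `λ ∈ ℂ` with `0 < |λ| < 1` and `μ` with `|μ| = 1`, let
`σ(ξ,η) = (λξ, μη)`, let `f : (ℂ∖{0})² → ℝ≥0` be measurable and `σ`-invariant, let
`ψ(ξ,η) = (log|ξ|²)² + log(|η|² + 1/|η|²)` and let `ν` be a `σ`-invariant measure.
If `∫_{D₀} f dν < ∞`, where `D₀ = {|λ| ≤ |ξ| ≤ 1}`, then
`∫_{(ℂ*)²} f e^{-ψ} dν ≤ (Σ_{n≥0} 2 e^{-n²(log|λ|²)²}) · ∫_{D₀} f dν < ∞`. -/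
theorem stmt6 (l μ : ℂ) (hl0 : 0 < ‖l‖) (hl1 : ‖l‖ < 1) (hμ : ‖μ‖ = 1)
    (ν : Measure (ℂ × ℂ)) (f : ℂ × ℂ → ℝ≥0) (hf : Measurable f)
    (hinv : ∀ p : ℂ × ℂ, f (l * p.1, μ * p.2) = f p)
    (hν : MeasurePreserving (fun p : ℂ × ℂ => (l * p.1, μ * p.2)) ν ν)
    (hfin : ∫⁻ p in {p : ℂ × ℂ | ‖l‖ ≤ ‖p.1‖ ∧ ‖p.1‖ ≤ 1}, (f p : ℝ≥0∞) ∂ν < ⊤) :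
    ∫⁻ p in {p : ℂ × ℂ | p.1 ≠ 0 ∧ p.2 ≠ 0},
        (f p : ℝ≥0∞) * ENNReal.ofReal
          (Real.exp (-((Real.log (‖p.1‖ ^ 2)) ^ 2
            + Real.log (‖p.2‖ ^ 2 + (‖p.2‖ ^ 2)⁻¹)))) ∂ν
      ≤ ENNReal.ofReal (∑' n : ℕ, 2 * Real.exp (-(n : ℝ) ^ 2 * (Real.log (‖l‖ ^ 2)) ^ 2))
          * ∫⁻ p in {p : ℂ × ℂ | ‖l‖ ≤ ‖p.1‖ ∧ ‖p.1‖ ≤ 1}, (f p : ℝ≥0∞) ∂ν ∧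
    ∫⁻ p in {p : ℂ × ℂ | p.1 ≠ 0 ∧ p.2 ≠ 0},
        (f p : ℝ≥0∞) * ENNReal.ofReal
          (Real.exp (-((Real.log (‖p.1‖ ^ 2)) ^ 2
            + Real.log (‖p.2‖ ^ 2 + (‖p.2‖ ^ 2)⁻¹)))) ∂ν < ⊤ := by
  have hl0' : l ≠ 0 := by simpa using hl0
  have hμ0 : μ ≠ 0 := by intro h; rw [h] at hμ; simp at hμ
  set c : ℝ := Real.log (‖l‖ ^ 2) with hc
  have hc0 : c < 0 := Real.log_neg (by positivity) (by nlinarith)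
  set D₀ : Set (ℂ × ℂ) := {p : ℂ × ℂ | ‖l‖ ≤ ‖p.1‖ ∧ ‖p.1‖ ≤ 1} with hD₀
  set E : ℂ × ℂ → ℝ≥0∞ := fun p => ENNReal.ofReal
      (Real.exp (-((Real.log (‖p.1‖ ^ 2)) ^ 2
        + Real.log (‖p.2‖ ^ 2 + (‖p.2‖ ^ 2)⁻¹)))) with hE
  set A : ℤ → Set (ℂ × ℂ) := fun n =>
    {p : ℂ × ℂ | ‖l‖ ^ (n+1) ≤ ‖p.1‖ ∧ ‖p.1‖ ≤ ‖l‖ ^ n ∧ p.2 ≠ 0} with hA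
  have hA_meas : ∀ n : ℤ, MeasurableSet (A n) := by
    intro n
    have h1 : MeasurableSet {p : ℂ × ℂ | ‖l‖ ^ (n+1) ≤ ‖p.1‖} :=
      measurableSet_le measurable_const measurable_fst.norm
    have h2 : MeasurableSet {p : ℂ × ℂ | ‖p.1‖ ≤ ‖l‖ ^ n} :=
      measurableSet_le measurable_fst.norm measurable_const
    have h3 : MeasurableSet {p : ℂ × ℂ | p.2 ≠ 0} :=
      (isClosed_eq continuous_snd continuous_const).measurableSet.compl
    exact h1.inter (h2.inter h3)
  -- the integrals of f over the A n are all equal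
  have hstep : ∀ n : ℤ, ∫⁻ p in A n, (f p : ℝ≥0∞) ∂ν = ∫⁻ p in A (n+1), (f p : ℝ≥0∞) ∂ν := by
    intro n
    have hpre : (fun p : ℂ × ℂ => (l * p.1, μ * p.2)) ⁻¹' A (n+1) = A n := by
      ext p
      simp only [hA, Set.mem_preimage, Set.mem_setOf_eq, norm_mul, hμ, one_mul, mul_ne_zero_iff]
      have h1 : ‖l‖ ^ (n+1+1) = ‖l‖ * ‖l‖ ^ (n+1) := by
        rw [← zpow_one_add₀ (ne_of_gt hl0)]; ring_nf
      have h2 : ‖l‖ ^ (n+1) = ‖l‖ * ‖l‖ ^ n := by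
        rw [← zpow_one_add₀ (ne_of_gt hl0)]; ring_nf
      constructor
      · rintro ⟨ha, hb, hc⟩
        refine ⟨?_, ?_, hc.2⟩
        · rw [h1] at ha; exact le_of_mul_le_mul_left ha hl0
        · rw [h2] at hb; exact le_of_mul_le_mul_left hb hl0
      · rintro ⟨ha, hb, hc⟩
        exact ⟨by rw [h1]; exact mul_le_mul_of_nonneg_left ha hl0.le,
          by rw [h2]; exact mul_le_mul_of_nonneg_left hb hl0.le, hμ0, hc⟩
    calc ∫⁻ p in A n, (f p : ℝ≥0∞) ∂ν
        = ∫⁻ p in (fun p : ℂ × ℂ => (l * p.1, μ * p.2)) ⁻¹' A (n+1),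
            (f (l * p.1, μ * p.2) : ℝ≥0∞) ∂ν := by
          rw [hpre]; exact setLIntegral_congr_fun (hA_meas n)
            (fun p _ => by rw [hinv p])
      _ = ∫⁻ p in A (n+1), (f p : ℝ≥0∞) ∂ν :=
          hν.setLIntegral_comp_preimage (hA_meas (n+1)) hf.coe_nnreal_ennreal
  have hAeq : ∀ n : ℤ, ∫⁻ p in A n, (f p : ℝ≥0∞) ∂ν = ∫⁻ p in A 0, (f p : ℝ≥0∞) ∂ν := by
    intro n
    induction n using Int.induction_on with
    | zero => rfl
    | succ k ih => rw [← hstep]; exact ih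
    | pred k ih => rw [show (-(k:ℤ) - 1 : ℤ) = (-(k:ℤ) - 1) from rfl, hstep]
                   simpa using ih
  -- index of the dominating exponential on each annulus
  set k : ℤ → ℕ := fun n => (max n (-(n+1))).toNat with hk
  have hk_pos : ∀ m : ℕ, k (m : ℤ) = m := by
    intro m
    simp only [hk]
    rw [max_eq_left (by omega : -((m:ℤ)+1) ≤ (m:ℤ))]
    exact Int.toNat_natCast m
  have hk_neg : ∀ m : ℕ, k (-((m:ℤ)+1)) = m := by
    intro m
    simp only [hk]
    rw [show (-(-((m:ℤ)+1)+1)) = (m:ℤ) by ring, max_eq_right (by omega : -((m:ℤ)+1) ≤ (m:ℤ))]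
    exact Int.toNat_natCast m
  -- pointwise bound for the weight on A n
  have hkey : ∀ n : ℤ, ∀ p ∈ A n,
      E p ≤ ENNReal.ofReal ((1/2) * Real.exp (-((k n : ℕ) : ℝ)^2 * c^2)) := by
    intro n p hp
    obtain ⟨h1, h2, h3⟩ := hp
    have hp2 : (0:ℝ) < ‖p.2‖ := norm_pos_iff.mpr h3
    have hx : (0:ℝ) < ‖p.2‖^2 := by positivity
    have hp1 : (0:ℝ) < ‖p.1‖ := lt_of_lt_of_le (by positivity) h1
    set L : ℝ := Real.log (‖p.1‖ ^ 2) with hL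
    have hlog1 : ((n:ℝ)+1) * Real.log ‖l‖ ≤ Real.log ‖p.1‖ := by
      have := Real.log_le_log (by positivity) h1
      rwa [Real.log_zpow, Int.cast_add, Int.cast_one] at this
    have hlog2 : Real.log ‖p.1‖ ≤ (n:ℝ) * Real.log ‖l‖ := by
      have := Real.log_le_log hp1 h2
      rwa [Real.log_zpow] at this
    have hLval : L = 2 * Real.log ‖p.1‖ := by
      rw [hL, Real.log_pow]; norm_num
    have hcval : c = 2 * Real.log ‖l‖ := by
      rw [hc, Real.log_pow]; norm_num
    have hL1 : ((n:ℝ)+1) * c ≤ L := by rw [hLval, hcval]; nlinarith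
    have hL2 : L ≤ (n:ℝ) * c := by rw [hLval, hcval]; nlinarith
    have hk2 : ((k n : ℕ) : ℝ)^2 * c^2 ≤ L^2 := by
      rcases le_or_gt 0 n with h | h
      · have hkn : ((k n : ℕ) : ℝ) = (n : ℝ) := by
          have : ((k n : ℕ) : ℤ) = n := by
            simp only [hk]
            rw [max_eq_left (by omega : -(n+1) ≤ n)]
            exact Int.toNat_of_nonneg h
          exact_mod_cast congrArg (Int.cast : ℤ → ℝ) this
        have hnc : (n:ℝ) * c ≤ 0 :=
          mul_nonpos_of_nonneg_of_nonpos (by exact_mod_cast h) hc0.le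
        rw [hkn]; nlinarith [hL2, hnc]
      · have hkn : ((k n : ℕ) : ℝ) = -((n:ℝ)+1) := by
          have : ((k n : ℕ) : ℤ) = -(n+1) := by
            simp only [hk]
            rw [max_eq_right (by omega : n ≤ -(n+1))]
            exact Int.toNat_of_nonneg (by omega)
          have := congrArg (Int.cast : ℤ → ℝ) this
          push_cast at this ⊢
          linarith [this]
        have hnc : 0 ≤ ((n:ℝ)+1) * c := by
          have hn1 : ((n:ℝ)+1) ≤ 0 := by exact_mod_cast (by omega : (n:ℤ)+1 ≤ 0)
          nlinarith [hn1, hc0.le]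
        rw [hkn]; nlinarith [hL1, hnc]
    set t : ℝ := ‖p.2‖^2 + (‖p.2‖^2)⁻¹ with hT
    have hxinv : ‖p.2‖^2 * (‖p.2‖^2)⁻¹ = 1 := mul_inv_cancel₀ (ne_of_gt hx)
    have ht2 : (2:ℝ) ≤ t := by
      rw [hT]
      nlinarith [sq_nonneg (‖p.2‖^2 - 1), hx, hxinv]
    have ht0 : (0:ℝ) < t := lt_of_lt_of_le two_pos ht2
    have hexp : Real.exp (-(L^2 + Real.log t))
        ≤ (1/2) * Real.exp (-((k n : ℕ) : ℝ)^2 * c^2) := by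
      rw [neg_add, Real.exp_add, Real.exp_neg (Real.log t), Real.exp_log ht0]
      have e1 : Real.exp (-L^2) ≤ Real.exp (-((k n : ℕ) : ℝ)^2 * c^2) := by
        apply Real.exp_le_exp.mpr; linarith [hk2]
      have e2 : t⁻¹ ≤ (2:ℝ)⁻¹ := by
        apply inv_anti₀ two_pos ht2
      calc Real.exp (-L^2) * t⁻¹
          ≤ Real.exp (-((k n : ℕ) : ℝ)^2 * c^2) * (2:ℝ)⁻¹ :=
            mul_le_mul e1 e2 (by positivity) (Real.exp_nonneg _)
        _ = (1/2) * Real.exp (-((k n : ℕ) : ℝ)^2 * c^2) := by ring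
    exact ENNReal.ofReal_le_ofReal hexp
  -- integral bound on each annulus
  have hA0D : A 0 ⊆ D₀ := by
    intro p hp
    obtain ⟨h1, h2, _⟩ := hp
    constructor
    · simpa using h1
    · simpa using h2
  have hbound : ∀ n : ℤ, ∫⁻ p in A n, (f p : ℝ≥0∞) * E p ∂ν
      ≤ ENNReal.ofReal ((1/2) * Real.exp (-((k n : ℕ) : ℝ)^2 * c^2))
          * ∫⁻ p in D₀, (f p : ℝ≥0∞) ∂ν := by
    intro n
    calc ∫⁻ p in A n, (f p : ℝ≥0∞) * E p ∂ν
        ≤ ∫⁻ p in A n, ENNReal.ofReal ((1/2) * Real.exp (-((k n : ℕ) : ℝ)^2 * c^2))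
            * (f p : ℝ≥0∞) ∂ν := by
          apply setLIntegral_mono' (hA_meas n)
          intro p hp
          rw [mul_comm]
          exact mul_le_mul_left (hkey n p hp) _
      _ = ENNReal.ofReal ((1/2) * Real.exp (-((k n : ℕ) : ℝ)^2 * c^2))
            * ∫⁻ p in A n, (f p : ℝ≥0∞) ∂ν :=
          lintegral_const_mul' _ _ ENNReal.ofReal_ne_top
      _ = ENNReal.ofReal ((1/2) * Real.exp (-((k n : ℕ) : ℝ)^2 * c^2))
            * ∫⁻ p in A 0, (f p : ℝ≥0∞) ∂ν := by rw [hAeq n]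
      _ ≤ _ := mul_le_mul_right (lintegral_mono_set hA0D) _
  -- the annuli cover (ℂ*)²
  have hcov : {p : ℂ × ℂ | p.1 ≠ 0 ∧ p.2 ≠ 0} ⊆ ⋃ n : ℤ, A n := by
    rintro p ⟨h1, h2⟩
    have hp1 : (0:ℝ) < ‖p.1‖ := norm_pos_iff.mpr h1
    have hinvl : 1 < ‖l‖⁻¹ := (one_lt_inv₀ hl0).mpr hl1
    obtain ⟨n, hn1, hn2⟩ := exists_mem_Ico_zpow hp1 hinvl
    refine Set.mem_iUnion.mpr ⟨-(n+1), ?_, ?_, h2⟩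
    · have : ‖l‖ ^ (-(n+1)+1) = (‖l‖⁻¹) ^ n := by
        rw [show (-(n+1)+1 : ℤ) = -n by ring, zpow_neg, inv_zpow]
      rw [this]; exact hn1
    · have : ‖l‖ ^ (-(n+1)) = (‖l‖⁻¹) ^ (n+1) := by
        rw [zpow_neg, inv_zpow]
      rw [this]; exact hn2.le
  -- summability of the series
  have hc2 : (0:ℝ) < c^2 := by nlinarith
  have hsum : Summable (fun m : ℕ => 2 * Real.exp (-(m:ℝ)^2 * c^2)) := by
    apply Summable.mul_left
    apply Summable.of_nonneg_of_le (fun m => Real.exp_nonneg _)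
      (fun m => ?_) (summable_geometric_of_lt_one (Real.exp_nonneg (-c^2))
        (Real.exp_lt_one_iff.mpr (by linarith)))
    rw [← Real.exp_nat_mul]
    apply Real.exp_le_exp.mpr
    have hmm : (m:ℝ) ≤ (m:ℝ)^2 := by
      have : m ≤ m^2 := Nat.le_self_pow two_ne_zero m
      exact_mod_cast this
    nlinarith
  -- the ℤ-indexed series is bounded by the given ℕ-series
  have htsum : (∑' n : ℤ, ENNReal.ofReal ((1/2) * Real.exp (-((k n : ℕ) : ℝ)^2 * c^2)))
      ≤ ENNReal.ofReal (∑' m : ℕ, 2 * Real.exp (-(m:ℝ)^2 * c^2)) := by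
    rw [tsum_of_nat_of_neg_add_one ENNReal.summable ENNReal.summable]
    simp only [hk_pos, hk_neg]
    calc (∑' m : ℕ, ENNReal.ofReal ((1/2) * Real.exp (-(m:ℝ)^2 * c^2)))
          + (∑' m : ℕ, ENNReal.ofReal ((1/2) * Real.exp (-(m:ℝ)^2 * c^2)))
        = ∑' m : ℕ, (ENNReal.ofReal ((1/2) * Real.exp (-(m:ℝ)^2 * c^2))
            + ENNReal.ofReal ((1/2) * Real.exp (-(m:ℝ)^2 * c^2))) := ENNReal.tsum_add.symm
      _ ≤ ∑' m : ℕ, ENNReal.ofReal (2 * Real.exp (-(m:ℝ)^2 * c^2)) := by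
          apply ENNReal.tsum_le_tsum
          intro m
          rw [← ENNReal.ofReal_add (by positivity) (by positivity)]
          apply ENNReal.ofReal_le_ofReal
          nlinarith [Real.exp_nonneg (-(m:ℝ)^2 * c^2)]
      _ = ENNReal.ofReal (∑' m : ℕ, 2 * Real.exp (-(m:ℝ)^2 * c^2)) :=
          (ENNReal.ofReal_tsum_of_nonneg (fun m => by positivity) hsum).symm
  -- main estimate
  have hmain : ∫⁻ p in {p : ℂ × ℂ | p.1 ≠ 0 ∧ p.2 ≠ 0}, (f p : ℝ≥0∞) * E p ∂ν
      ≤ ENNReal.ofReal (∑' m : ℕ, 2 * Real.exp (-(m:ℝ)^2 * c^2))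
          * ∫⁻ p in D₀, (f p : ℝ≥0∞) ∂ν := by
    calc ∫⁻ p in {p : ℂ × ℂ | p.1 ≠ 0 ∧ p.2 ≠ 0}, (f p : ℝ≥0∞) * E p ∂ν
        ≤ ∫⁻ p in ⋃ n : ℤ, A n, (f p : ℝ≥0∞) * E p ∂ν := lintegral_mono_set hcov
      _ ≤ ∑' n : ℤ, ∫⁻ p in A n, (f p : ℝ≥0∞) * E p ∂ν := lintegral_iUnion_le _ _
      _ ≤ ∑' n : ℤ, ENNReal.ofReal ((1/2) * Real.exp (-((k n : ℕ) : ℝ)^2 * c^2))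
            * ∫⁻ p in D₀, (f p : ℝ≥0∞) ∂ν := ENNReal.tsum_le_tsum hbound
      _ = (∑' n : ℤ, ENNReal.ofReal ((1/2) * Real.exp (-((k n : ℕ) : ℝ)^2 * c^2)))
            * ∫⁻ p in D₀, (f p : ℝ≥0∞) ∂ν := ENNReal.tsum_mul_right
      _ ≤ _ := mul_le_mul_left htsum _
  exact ⟨hmain, lt_of_le_of_lt hmain
    (ENNReal.mul_lt_top ENNReal.ofReal_lt_top hfin)⟩
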